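/- Let d ≥ 1, let A_1,…,A_s and B_1,…,B_s be real d×d matrices, h > 0, and p_{n+1} ∈ ℝ^d. Suppose ζ^(1),…,ζ^(s) ∈ ℝ^d satisfy the discrete adjoint system of (SRK1): ζ^(i) = h (ω̃_i A_i + ω_i B_i) p_{n+1} + h Σ_{j=1}^{s} ã_{ji} A_i ζ^(j) + h Σ_{j=1}^{s} a_{ji} B_i ζ^(j) for i = 1,…,s, together with p_n = p_{n+1} + Σ_{i=1}^{s} ζ^(i). Define P̃^(i) := p_{n+1} + Σ_{j=1}^{s} (ã_{ji}/ω̃_i) ζ^(j) and P^(i) := p_{n+1} + Σ_{j=1}^{s} (a_{ji}/ω_i) ζ^(j). Then ζ^(i) = h ω̃_i A_i P̃^(i) + h ω_i B_i P^(i) for all i, and (P̃^(i), P^(i), p_n, p_{n+1}) satisfy the adjoint IMEX Runge–Kutta scheme (ARK): P̃^(i) = p_n − h Σ_{j=1}^{s} α̃_{ij} A_j P̃^(j) − h Σ_{j=1}^{s} α_{ij} B_j P^(j), P^(i) = p_n − h Σ_{j=1}^{s} β̃_{ij} A_j P̃^(j) − h Σ_{j=1}^{s} β_{ij} B_j P^(j)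 for i = 1,…,s, and p_{n+1} = p_n − h Σ_{i=1}^{s} ω̃_i A_i P̃^(i) − h Σ_{i=1}^{s} ω_i B_i P^(i). -/

import Mathlib

open Finset Matrix


private lemma mulVec_sum' {s d : ℕ} (M : Matrix (Fin d) (Fin d) ℝ) (v : Fin s → Fin d → ℝ) :
    M *ᵥ (∑ j, v j) = ∑ j, M *ᵥ v j := by
  rw [← M.mulVecLin_apply, map_sum]
  simp [Matrix.mulVecLin_apply]

theorem adjoint_srk1_to_ark (s d : ℕ) (hs : 1 ≤ s) (hd : 1 ≤ d)
    (ta a : Fin s → Fin s → ℝ) (tw w : Fin s → ℝ)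
    (hta : ∀ i j : Fin s, i ≤ j → ta i j = 0)
    (ha : ∀ i j : Fin s, i < j → a i j = 0)
    (htw : ∀ i, tw i ≠ 0) (hw : ∀ i, w i ≠ 0)
    (tα α tβ β : Fin s → Fin s → ℝ)
    (htα : ∀ i j, tα i j = tw j - (tw j / tw i) * ta j i)
    (hα : ∀ i j, α i j = w j - (w j / tw i) * ta j i)
    (htβ : ∀ i j, tβ i j = tw j - (tw j / w i) * a j i)
    (hβ : ∀ i j, β i j = w j - (w j / w i) * a j i)
    (A B : Fin s → Matrix (Fin d) (Fin d) ℝ)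
    (h : ℝ) (hh : 0 < h) (pn1 : Fin d → ℝ)
    (ζ : Fin s → Fin d → ℝ)
    (hζ : ∀ i, ζ i = h • (tw i • (A i *ᵥ pn1) + w i • (B i *ᵥ pn1))
        + h • ∑ j, ta j i • (A i *ᵥ ζ j) + h • ∑ j, a j i • (B i *ᵥ ζ j))
    (pn : Fin d → ℝ)
    (hpn : pn = pn1 + ∑ i, ζ i)
    (tP P : Fin s → Fin d → ℝ)
    (htP : ∀ i, tP i = pn1 + ∑ j, (ta j i / tw i) • ζ j)
    (hP : ∀ i, P i = pn1 + ∑ j, (a j i / w i) • ζ j) :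
    (∀ i, ζ i = (h * tw i) • (A i *ᵥ tP i) + (h * w i) • (B i *ᵥ P i)) ∧
    (∀ i, tP i = pn - h • ∑ j, tα i j • (A j *ᵥ tP j)
                    - h • ∑ j, α i j • (B j *ᵥ P j)) ∧
    (∀ i, P i = pn - h • ∑ j, tβ i j • (A j *ᵥ tP j)
                   - h • ∑ j, β i j • (B j *ᵥ P j)) ∧
    pn1 = pn - h • ∑ i, tw i • (A i *ᵥ tP i) - h • ∑ i, w i • (B i *ᵥ P i) := by
  have hζ' : ∀ i, ζ i = (h * tw i) • (A i *ᵥ tP i) + (h * w i) • (B i *ᵥ P i) := by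
    intro i
    have e1 : A i *ᵥ tP i = A i *ᵥ pn1 + ∑ j, (ta j i / tw i) • (A i *ᵥ ζ j) := by
      rw [htP i, Matrix.mulVec_add, mulVec_sum']
      simp [Matrix.mulVec_smul]
    have e2 : B i *ᵥ P i = B i *ᵥ pn1 + ∑ j, (a j i / w i) • (B i *ᵥ ζ j) := by
      rw [hP i, Matrix.mulVec_add, mulVec_sum']
      simp [Matrix.mulVec_smul]
    have s1 : (h * tw i) • ∑ j, (ta j i / tw i) • (A i *ᵥ ζ j)
        = h • ∑ j, ta j i • (A i *ᵥ ζ j) := by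
      rw [Finset.smul_sum, Finset.smul_sum]
      refine Finset.sum_congr rfl fun j _ => ?_
      rw [smul_smul, smul_smul]
      congr 1
      field_simp [htw i]
    have s2 : (h * w i) • ∑ j, (a j i / w i) • (B i *ᵥ ζ j)
        = h • ∑ j, a j i • (B i *ᵥ ζ j) := by
      rw [Finset.smul_sum, Finset.smul_sum]
      refine Finset.sum_congr rfl fun j _ => ?_
      rw [smul_smul, smul_smul]
      congr 1
      field_simp [hw i]
    rw [hζ i, e1, e2, smul_add (h * tw i), smul_add (h * w i), s1, s2]
    module
  refine ⟨hζ', ?_, ?_, ?_⟩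
  · intro i
    have key : ∑ j, ζ j - ∑ j, (ta j i / tw i) • ζ j
        = h • ∑ j, tα i j • (A j *ᵥ tP j) + h • ∑ j, α i j • (B j *ᵥ P j) := by
      rw [← Finset.sum_sub_distrib, Finset.smul_sum, Finset.smul_sum,
        ← Finset.sum_add_distrib]
      refine Finset.sum_congr rfl fun j _ => ?_
      rw [hζ' j, htα, hα]
      match_scalars <;> field_simp [htw i] <;> ring
    rw [htP i, hpn, sub_sub, ← key]
    abel
  · intro i
    have key : ∑ j, ζ j - ∑ j, (a j i / w i) • ζ j
        = h • ∑ j, tβ i j • (A j *ᵥ tP j) + h • ∑ j, β i j • (B j *ᵥ P j) := by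
      rw [← Finset.sum_sub_distrib, Finset.smul_sum, Finset.smul_sum,
        ← Finset.sum_add_distrib]
      refine Finset.sum_congr rfl fun j _ => ?_
      rw [hζ' j, htβ, hβ]
      match_scalars <;> field_simp [hw i] <;> ring
    rw [hP i, hpn, sub_sub, ← key]
    abel
  · have key : ∑ i, ζ i
        = h • ∑ i, tw i • (A i *ᵥ tP i) + h • ∑ i, w i • (B i *ᵥ P i) := by
      rw [Finset.smul_sum, Finset.smul_sum, ← Finset.sum_add_distrib]
      refine Finset.sum_congr rfl fun i _ => ?_
      rw [hζ' i]
      module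
    rw [hpn, sub_sub, ← key]
    abel
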